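/- arXiv:1010.3688 — 2 statements merged into one kernel-verified Lean document; each statement's English description precedes it below -/
import Mathlib

section
/- Let {A_k : ℝ^m → ℝ^m, k ∈ ℤ} be a sequence of linear isomorphisms for which there is a constant N > 0 with ‖A_k‖ ≤ N and ‖A_k⁻¹‖ ≤ N for all k. Assume that for every bounded sequence {w_k ∈ ℝ^m, k ∈ ℤ} there exists a bounded sequence {v_k ∈ ℝ^m, k ∈ ℤ} such that v_{k+1} = A_k v_k + w_k for all k ∈ ℤ. Then the sequence {A_k} is hyperbolic on the ray [0, +∞). -/
open Filter Topology

/-- Transition map `Φ(k,l)` for `k = l + n`, `n ≥ 0`: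
`Φ(l+n+1, l) = A_{l+n} ∘ Φ(l+n, l)`. -/
noncomputable def PhiPos {m : ℕ}
    (A : ℤ → (EuclideanSpace ℝ (Fin m) ≃L[ℝ] EuclideanSpace ℝ (Fin m))) (l : ℤ) :
    ℕ → (EuclideanSpace ℝ (Fin m) →L[ℝ] EuclideanSpace ℝ (Fin m))
  | 0 => 1
  | n + 1 =>
      ((A (l + n) : EuclideanSpace ℝ (Fin m) →L[ℝ] EuclideanSpace ℝ (Fin m))).comp
        (PhiPos A l n)

/-- Transition map `Φ(k,l)` for `l = k + n`, `n ≥ 0`: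
`Φ(k, k+n+1) = Φ(k, k+n) ∘ A_{k+n}⁻¹`. -/
noncomputable def PhiNeg {m : ℕ}
    (A : ℤ → (EuclideanSpace ℝ (Fin m) ≃L[ℝ] EuclideanSpace ℝ (Fin m))) (k : ℤ) :
    ℕ → (EuclideanSpace ℝ (Fin m) →L[ℝ] EuclideanSpace ℝ (Fin m))
  | 0 => 1
  | n + 1 =>
      (PhiNeg A k n).comp
        (((A (k + n)).symm : EuclideanSpace ℝ (Fin m) →L[ℝ] EuclideanSpace ℝ (Fin m)))

/-- The transition maps `Φ(k,l)`: `Φ(k,l) = A_{k-1} ∘ ⋯ ∘ A_l` for `l < k`,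
`Φ(k,k) = Id`, and `Φ(k,l) = A_k⁻¹ ∘ ⋯ ∘ A_{l-1}⁻¹` for `l > k`. -/
noncomputable def Phi {m : ℕ}
    (A : ℤ → (EuclideanSpace ℝ (Fin m) ≃L[ℝ] EuclideanSpace ℝ (Fin m))) (k l : ℤ) :
    EuclideanSpace ℝ (Fin m) →L[ℝ] EuclideanSpace ℝ (Fin m) :=
  if l ≤ k then PhiPos A l (k - l).toNat else PhiNeg A k (l - k).toNat

/-- `B⁺(𝒜) = {v : ‖Φ(k,0)v‖ → 0 as k → +∞}`. -/
def Bplus {m : ℕ}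
    (A : ℤ → (EuclideanSpace ℝ (Fin m) ≃L[ℝ] EuclideanSpace ℝ (Fin m))) :
    Set (EuclideanSpace ℝ (Fin m)) :=
  {v | Tendsto (fun k : ℤ => ‖Phi A k 0 v‖) atTop (𝓝 0)}

/-- `B⁻(𝒜) = {v : ‖Φ(k,0)v‖ → 0 as k → -∞}`. -/
def Bminus {m : ℕ}
    (A : ℤ → (EuclideanSpace ℝ (Fin m) ≃L[ℝ] EuclideanSpace ℝ (Fin m))) :
    Set (EuclideanSpace ℝ (Fin m)) :=
  {v | Tendsto (fun k : ℤ => ‖Phi A k 0 v‖) atBot (𝓝 0)}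

/-- The sequence `𝒜` is hyperbolic on the ray `[0, +∞)`. -/
def HyperbolicOnPlusRay {m : ℕ}
    (A : ℤ → (EuclideanSpace ℝ (Fin m) ≃L[ℝ] EuclideanSpace ℝ (Fin m))) : Prop :=
  ∃ (C lam : ℝ)
    (P : ℤ → (EuclideanSpace ℝ (Fin m) →L[ℝ] EuclideanSpace ℝ (Fin m))),
    0 < C ∧ lam ∈ Set.Ioo (0 : ℝ) 1 ∧
    (∀ k : ℤ, 0 ≤ k → (P k).comp (P k) = P k) ∧
    (∀ k l : ℤ, 0 ≤ k → 0 ≤ l → (P k).comp (Phi A k l) = (Phi A k l).comp (P l)) ∧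
    (∀ k l : ℤ, 0 ≤ l → l ≤ k → ∀ v : EuclideanSpace ℝ (Fin m),
      ‖Phi A k l (P l v)‖ ≤ C * lam ^ (k - l).toNat * ‖v‖) ∧
    (∀ k l : ℤ, 0 ≤ k → k ≤ l → ∀ v : EuclideanSpace ℝ (Fin m),
      ‖Phi A k l ((1 - P l) v)‖ ≤ C * lam ^ (l - k).toNat * ‖v‖)

/-- The sequence `𝒜` is hyperbolic on the ray `(-∞, 0]`. -/
def HyperbolicOnMinusRay {m : ℕ}
    (A : ℤ → (EuclideanSpace ℝ (Fin m) ≃L[ℝ] EuclideanSpace ℝ (Fin m))) : Prop :=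
  ∃ (C lam : ℝ)
    (Q : ℤ → (EuclideanSpace ℝ (Fin m) →L[ℝ] EuclideanSpace ℝ (Fin m))),
    0 < C ∧ lam ∈ Set.Ioo (0 : ℝ) 1 ∧
    (∀ k : ℤ, k ≤ 0 → (Q k).comp (Q k) = Q k) ∧
    (∀ k l : ℤ, k ≤ 0 → l ≤ 0 → (Q k).comp (Phi A k l) = (Phi A k l).comp (Q l)) ∧
    (∀ k l : ℤ, l ≤ k → k ≤ 0 → ∀ v : EuclideanSpace ℝ (Fin m),
      ‖Phi A k l (Q l v)‖ ≤ C * lam ^ (k - l).toNat * ‖v‖) ∧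
    (∀ k l : ℤ, k ≤ l → l ≤ 0 → ∀ v : EuclideanSpace ℝ (Fin m),
      ‖Phi A k l ((1 - Q l) v)‖ ≤ C * lam ^ (l - k).toNat * ‖v‖)

open ENNReal

section Algebra

variable {m : ℕ} (A : ℤ → (EuclideanSpace ℝ (Fin m) ≃L[ℝ] EuclideanSpace ℝ (Fin m)))

local notation "E" => EuclideanSpace ℝ (Fin m)

lemma phi_self (k : ℤ) : Phi A k k = 1 := by
  simp [Phi, PhiPos]

lemma phiNeg_pull (n : ℕ) : ∀ k : ℤ, PhiNeg A k (n + 1) =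
    (((A k).symm : E →L[ℝ] E)).comp (PhiNeg A (k + 1) n) := by
  induction n with
  | zero =>
      intro k
      show (PhiNeg A k 0).comp (((A (k + (0:ℕ))).symm : E →L[ℝ] E)) = _
      simp [PhiNeg, ContinuousLinearMap.one_def]
  | succ n ih =>
      intro k
      have h1 : PhiNeg A k (n + 1 + 1) =
          (PhiNeg A k (n + 1)).comp (((A (k + (n + 1 : ℕ))).symm : E →L[ℝ] E)) := rfl
      rw [h1, ih k, ContinuousLinearMap.comp_assoc]
      have h2 : (k + ((n : ℤ) + 1)) = (k + 1) + (n : ℤ) := by ring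
      have h3 : ((n + 1 : ℕ) : ℤ) = (n : ℤ) + 1 := by push_cast; ring
      rw [h3, h2]
      rfl

lemma phi_step (k l : ℤ) : Phi A (k + 1) l = ((A k : E →L[ℝ] E)).comp (Phi A k l) := by
  rcases le_or_gt l k with h | h
  · have h1 : l ≤ k + 1 := by omega
    have h2 : (k + 1 - l).toNat = (k - l).toNat + 1 := by omega
    have h3 : (l + ((k - l).toNat : ℤ)) = k := by omega
    simp only [Phi, if_pos h, if_pos h1, h2]
    show ((A (l + ((k - l).toNat : ℤ)) : E →L[ℝ] E)).comp (PhiPos A l (k - l).toNat) = _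
    rw [h3]
  · rcases eq_or_lt_of_le (by omega : k + 1 ≤ l) with h1 | h1
    · subst h1
      have h2 : ¬ (k + 1 ≤ k) := by omega
      have h3 : (k + 1 - k).toNat = 1 := by omega
      simp only [Phi, if_pos (le_refl (k+1)), if_neg h2, h3]
      have h4 : (k + 1 - (k + 1)).toNat = 0 := by omega
      rw [h4]
      show (1 : E →L[ℝ] E) = (A k : E →L[ℝ] E).comp ((PhiNeg A k 0).comp (((A (k + (0:ℕ))).symm : E →L[ℝ] E)))
      simp [PhiNeg, ContinuousLinearMap.one_def]
    · have h2 : ¬ (l ≤ k + 1) := by omega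
      have h3 : ¬ (l ≤ k) := by omega
      simp only [Phi, if_neg h2, if_neg h3]
      have h4 : (l - k).toNat = (l - (k + 1)).toNat + 1 := by omega
      rw [h4, phiNeg_pull, ← ContinuousLinearMap.comp_assoc]
      simp [ContinuousLinearMap.one_def]

lemma phi_step_down (k l : ℤ) : Phi A (k - 1) l =
    (((A (k - 1)).symm : E →L[ℝ] E)).comp (Phi A k l) := by
  have h := phi_step A (k - 1) l
  rw [sub_add_cancel] at h
  rw [h, ← ContinuousLinearMap.comp_assoc]
  simp [ContinuousLinearMap.one_def]

lemma phi_comp (k l j : ℤ) : (Phi A k l).comp (Phi A l j) = Phi A k j := by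
  rcases le_total l k with h | h
  · refine Int.le_induction (m := l)
      (motive := fun k _ => (Phi A k l).comp (Phi A l j) = Phi A k j) ?_ ?_ k h
    · show (Phi A l l).comp (Phi A l j) = Phi A l j
      rw [phi_self]
      simp [ContinuousLinearMap.one_def]
    · intro n _ ih
      show (Phi A (n+1) l).comp (Phi A l j) = Phi A (n+1) j
      rw [phi_step, phi_step, ContinuousLinearMap.comp_assoc, ih]
  · refine Int.le_induction_down (m := l)
      (motive := fun k _ => (Phi A k l).comp (Phi A l j) = Phi A k j) ?_ ?_ k h
    · show (Phi A l l).comp (Phi A l j) = Phi A l j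
      rw [phi_self]
      simp [ContinuousLinearMap.one_def]
    · intro n _ ih
      show (Phi A (n-1) l).comp (Phi A l j) = Phi A (n-1) j
      rw [phi_step_down, phi_step_down, ContinuousLinearMap.comp_assoc, ih]

lemma phi_comp_apply (k l j : ℤ) (v : E) : Phi A k l (Phi A l j v) = Phi A k j v := by
  conv_rhs => rw [← phi_comp A k l j]
  rfl

lemma phi_inv_apply (k l : ℤ) (v : E) : Phi A k l (Phi A l k v) = v := by
  rw [phi_comp_apply, phi_self]
  rfl

lemma phi_succ_apply (k l : ℤ) (v : E) : Phi A (k + 1) l v = A k (Phi A k l v) := by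
  rw [phi_step]
  rfl

lemma phi_injective (k l : ℤ) {v : E} (h : Phi A k l v = 0) : v = 0 := by
  have := phi_inv_apply A l k v
  rw [h] at this
  simpa using this.symm


lemma exists_L (N : ℝ) (hN : 0 < N)
    (hA : ∀ k : ℤ, ‖(A k : E →L[ℝ] E)‖ ≤ N)
    (hsolv : ∀ w : ℤ → E, (∃ C : ℝ, ∀ k : ℤ, ‖w k‖ ≤ C) →
      ∃ v : ℤ → E, (∃ C : ℝ, ∀ k : ℤ, ‖v k‖ ≤ C) ∧
        ∀ k : ℤ, v (k + 1) = A k (v k) + w k) :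
    ∃ L : ℝ, 1 ≤ L ∧ ∀ (w : ℕ → E) (c : ℝ), (∀ k, ‖w k‖ ≤ c) →
      ∃ v : ℕ → E, (∀ k, ‖v k‖ ≤ L * c) ∧ ∀ k : ℕ, v (k + 1) = A k (v k) + w k := by
  classical
  set X := lp (fun _ : ℕ => E) ∞ with hX
  have hNA : ∀ (k : ℕ) (x : E), ‖A k x‖ ≤ N * ‖x‖ := by
    intro k x
    calc ‖A k x‖ = ‖(A k : E →L[ℝ] E) x‖ := rfl
    _ ≤ ‖(A k : E →L[ℝ] E)‖ * ‖x‖ := (A k : E →L[ℝ] E).le_opNorm x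
    _ ≤ N * ‖x‖ := by
        apply mul_le_mul_of_nonneg_right (hA _) (norm_nonneg _)
  have hg : ∀ (v : X) (k : ℕ), ‖v (k+1) - A k (v k)‖ ≤ (1 + N) * ‖v‖ := by
    intro v k
    calc ‖v (k+1) - A k (v k)‖ ≤ ‖v (k+1)‖ + ‖A k (v k)‖ := norm_sub_le _ _
    _ ≤ ‖v‖ + N * ‖v k‖ := by
        gcongr
        · exact lp.norm_apply_le_norm ENNReal.top_ne_zero v (k+1)
        · exact hNA k (v k)
    _ ≤ ‖v‖ + N * ‖v‖ := by
        have := lp.norm_apply_le_norm ENNReal.top_ne_zero v k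
        nlinarith [norm_nonneg v]
    _ = (1 + N) * ‖v‖ := by ring
  have hmem : ∀ v : X, Memℓp (fun k : ℕ => v (k+1) - A k (v k)) ∞ := by
    intro v
    apply memℓp_infty
    refine ⟨(1 + N) * ‖v‖, ?_⟩
    rintro x ⟨k, rfl⟩
    exact hg v k
  let Slin : X →ₗ[ℝ] X :=
    { toFun := fun v => ⟨fun k => v (k+1) - A k (v k), hmem v⟩
      map_add' := by
        intro v w
        apply lp.ext
        funext k
        show (v + w) (k+1) - A k ((v + w) k) =
          (v (k+1) - A k (v k)) + (w (k+1) - A k (w k))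
        rw [lp.coeFn_add]
        simp [map_add]
        abel
      map_smul' := by
        intro a v
        apply lp.ext
        funext k
        show (a • v) (k+1) - A k ((a • v) k) = a • (v (k+1) - A k (v k))
        rw [lp.coeFn_smul]
        simp [map_smul, smul_sub] }
  let Sop : X →L[ℝ] X := Slin.mkContinuous (1 + N) (fun v => by
    apply lp.norm_le_of_forall_le
    · positivity
    · intro k
      exact hg v k)
  have hSop_apply : ∀ (v : X) (k : ℕ), (Sop v) k = v (k+1) - A k (v k) := fun _ _ => rfl
  have hsurj : Function.Surjective Sop := by
    intro w
    set wZ : ℤ → E := fun k => if h : 0 ≤ k then w k.toNat else 0 with hwZ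
    have hwZb : ∀ k : ℤ, ‖wZ k‖ ≤ ‖w‖ := by
      intro k
      by_cases h : 0 ≤ k
      · simp only [hwZ, dif_pos h]
        exact lp.norm_apply_le_norm ENNReal.top_ne_zero w _
      · simp only [hwZ, dif_neg h, norm_zero]
        exact norm_nonneg w
    obtain ⟨vZ, ⟨cv, hcv⟩, hrec⟩ := hsolv wZ ⟨‖w‖, hwZb⟩
    have hmemv : Memℓp (fun n : ℕ => vZ n) ∞ := by
      apply memℓp_infty
      exact ⟨cv, by rintro x ⟨n, rfl⟩; exact hcv n⟩
    refine ⟨⟨fun n : ℕ => vZ n, hmemv⟩, ?_⟩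
    apply lp.ext
    funext n
    have h1 := hrec (n : ℤ)
    have h2 : ((n : ℤ) + 1) = ((n + 1 : ℕ) : ℤ) := by push_cast; ring
    rw [h2] at h1
    have h3 : wZ (n : ℤ) = w n := by
      simp only [hwZ, dif_pos (Int.natCast_nonneg n), Int.toNat_natCast]
    show vZ ((n + 1 : ℕ) : ℤ) - A n (vZ n) = w n
    rw [h1, h3]
    abel
  obtain ⟨C, hCpos, hC⟩ := Sop.exists_preimage_norm_le hsurj
  refine ⟨max C 1, le_max_right _ _, ?_⟩
  intro w c hwc
  have hc0 : 0 ≤ c := le_trans (norm_nonneg (w 0)) (hwc 0)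
  have hmemw : Memℓp w ∞ := memℓp_infty ⟨c, by rintro x ⟨k, rfl⟩; exact hwc k⟩
  set wlp : X := ⟨w, hmemw⟩ with hwlp
  have hwn : ‖wlp‖ ≤ c := lp.norm_le_of_forall_le hc0 (fun k => hwc k)
  obtain ⟨x, hx1, hx2⟩ := hC wlp
  refine ⟨fun k => x k, ?_, ?_⟩
  · intro k
    calc ‖x k‖ ≤ ‖x‖ := lp.norm_apply_le_norm ENNReal.top_ne_zero x k
    _ ≤ C * ‖wlp‖ := hx2
    _ ≤ max C 1 * c := by
        apply mul_le_mul (le_max_left _ _) hwn (norm_nonneg _) (by positivity)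
  · intro k
    have h1 : (Sop x) k = wlp k := by rw [hx1]
    have h2 : x (k+1) - A k (x k) = w k := h1
    have : x (k+1) = A k (x k) + w k := by
      rw [← h2]; abel
    exact this


lemma phi_nat_succ (i : ℕ) (ξ : E) :
    Phi A ((i + 1 : ℕ) : ℤ) 0 ξ = A i (Phi A i 0 ξ) := by
  have h : ((i + 1 : ℕ) : ℤ) = (i : ℤ) + 1 := by push_cast; ring
  rw [h, phi_succ_apply]

lemma traj_eq (y : ℕ → E) (h : ∀ i, y (i + 1) = A i (y i)) :
    ∀ i, y i = Phi A i 0 (y 0) := by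
  intro i
  induction i with
  | zero => simp [phi_self]
  | succ i ih => rw [h i, ih, ← phi_nat_succ]

/-- The stable set: initial values whose forward trajectory is bounded. -/
def Sset : Submodule ℝ E where
  carrier := {ξ | ∃ c : ℝ, ∀ k : ℕ, ‖Phi A k 0 ξ‖ ≤ c}
  add_mem' := by
    rintro a b ⟨ca, hca⟩ ⟨cb, hcb⟩
    exact ⟨ca + cb, fun k => by
      rw [map_add]
      exact le_trans (norm_add_le _ _) (add_le_add (hca k) (hcb k))⟩
  zero_mem' := ⟨0, fun k => by simp⟩
  smul_mem' := by
    rintro a x ⟨c, hc⟩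
    exact ⟨|a| * c, fun k => by
      rw [map_smul, norm_smul]
      exact mul_le_mul_of_nonneg_left (hc k) (abs_nonneg a)⟩

lemma exists_K0 : ∃ K : ℝ, 1 ≤ K ∧ ∀ ξ ∈ Sset A, ∀ k : ℕ, ‖Phi A k 0 ξ‖ ≤ K * ‖ξ‖ := by
  set g : ℕ → ↥(Sset A) →L[ℝ] E := fun k => (Phi A k 0).comp (Sset A).subtypeL with hg
  have hpt : ∀ x : ↥(Sset A), ∃ C, ∀ k : ℕ, ‖g k x‖ ≤ C := by
    rintro ⟨ξ, c, hc⟩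
    exact ⟨c, fun k => hc k⟩
  obtain ⟨C', hC'⟩ := banach_steinhaus hpt
  refine ⟨max C' 1, le_max_right _ _, ?_⟩
  intro ξ hξ k
  have h1 : ‖g k ⟨ξ, hξ⟩‖ ≤ ‖g k‖ * ‖(⟨ξ, hξ⟩ : ↥(Sset A))‖ := (g k).le_opNorm _
  have h2 : ‖g k ⟨ξ, hξ⟩‖ = ‖Phi A k 0 ξ‖ := rfl
  have h3 : ‖(⟨ξ, hξ⟩ : ↥(Sset A))‖ = ‖ξ‖ := rfl
  rw [h2, h3] at h1
  calc ‖Phi A k 0 ξ‖ ≤ ‖g k‖ * ‖ξ‖ := h1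
  _ ≤ max C' 1 * ‖ξ‖ := by
      apply mul_le_mul_of_nonneg_right (le_trans (hC' k) (le_max_left _ _)) (norm_nonneg _)

lemma exists_decay (L N₁ : ℝ) (hL : 1 ≤ L) (hN₁ : 1 ≤ N₁)
    (hstep : ∀ (k : ℕ) (x : E), ‖A k x‖ ≤ N₁ * ‖x‖)
    (hSOLV : ∀ (w : ℕ → E) (c : ℝ), (∀ k, ‖w k‖ ≤ c) →
      ∃ v : ℕ → E, (∀ k, ‖v k‖ ≤ L * c) ∧ ∀ k : ℕ, v (k + 1) = A k (v k) + w k) :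
    ∃ D θ : ℝ, 1 ≤ D ∧ θ ∈ Set.Ioo (0:ℝ) 1 ∧ ∀ ξ ∈ Sset A, ∀ n j : ℕ, n ≤ j →
      ‖Phi A j 0 ξ‖ ≤ D * θ ^ (j - n) * ‖Phi A n 0 ξ‖ := by
  classical
  obtain ⟨K, hK1, hK0⟩ := exists_K0 A
  set Cst : ℝ := L * (1 + K) with hCst
  have hCst2 : 2 ≤ Cst := by nlinarith
  have hCstpos : 0 < Cst := by linarith
  set θ : ℝ := 1 - 1 / Cst with hθ
  have hθpos : 0 < θ := by
    have : 1 / Cst ≤ 1 / 2 := by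
      apply one_div_le_one_div_of_le <;> linarith
    simp only [hθ]; linarith
  have hθlt : θ < 1 := by
    have : 0 < 1 / Cst := by positivity
    simp only [hθ]; linarith
  set D : ℝ := Cst * N₁ / θ with hD
  have hD1 : 1 ≤ D := by
    rw [hD, le_div_iff₀ hθpos]
    nlinarith
  -- the key estimate
  have key : ∀ ξ ∈ Sset A, ξ ≠ 0 → ∀ n j : ℕ, n < j →
      (∑ i ∈ Finset.Icc (n+1) j, ‖Phi A i 0 ξ‖⁻¹) * ‖Phi A j 0 ξ‖ ≤ Cst := by
    intro ξ hξ hξ0 n j hnj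
    set x : ℕ → E := fun i => Phi A i 0 ξ with hx
    have hx0 : ∀ i, x i ≠ 0 := by
      intro i h
      exact hξ0 (phi_injective A i 0 h)
    have hxrec : ∀ i, x (i + 1) = A i (x i) := fun i => phi_nat_succ A i ξ
    set w : ℕ → E := fun i => if n ≤ i ∧ i < j then ‖x (i+1)‖⁻¹ • x (i+1) else 0 with hw
    have hwb : ∀ i, ‖w i‖ ≤ 1 := by
      intro i
      simp only [hw]
      split
      · rw [norm_smul, norm_inv, norm_norm]
        rw [inv_mul_cancel₀ (norm_ne_zero_iff.2 (hx0 (i+1)))]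
      · simp
    obtain ⟨v, hvb, hvrec⟩ := hSOLV w 1 hwb
    set c : ℕ → ℝ := fun i => ∑ t ∈ Finset.Icc (n+1) (min i j), ‖x t‖⁻¹ with hc
    have hcnonneg : ∀ i, 0 ≤ c i := by
      intro i
      apply Finset.sum_nonneg
      intro t _
      positivity
    have hczero : ∀ i, i ≤ n → c i = 0 := by
      intro i hi
      simp only [hc]
      rw [Finset.Icc_eq_empty (by omega : ¬ (n+1 ≤ min i j)), Finset.sum_empty]
    have hcstep : ∀ i, c (i+1) = c i + (if n ≤ i ∧ i < j then ‖x (i+1)‖⁻¹ else 0) := by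
      intro i
      by_cases hcase : n ≤ i ∧ i < j
      · have h1 : min (i+1) j = i + 1 := by omega
        have h2 : min i j = i := by omega
        simp only [hc, h1, h2, if_pos hcase]
        exact Finset.sum_Icc_succ_top (by omega) _
      · have hif : (if n ≤ i ∧ i < j then ‖x (i+1)‖⁻¹ else 0) = 0 := if_neg hcase
        rw [hif, add_zero]
        rcases le_or_gt (i+1) n with hin | hin
        · rw [hczero (i+1) hin, hczero i (by omega)]
        · have hji : j ≤ i := by omega
          have h1 : min (i+1) j = min i j := by omega
          simp only [hc, h1]
    set u : ℕ → E := fun i => c i • x i with hu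
    have hurec : ∀ i, u (i+1) = A i (u i) + w i := by
      intro i
      have h1 : A i (u i) = c i • x (i+1) := by
        simp only [hu, map_smul, hxrec]
      simp only [hu, hcstep i, add_smul, h1, hw]
      split
      · rw [hxrec, map_smul]
      · simp [hxrec]
    set d : ℕ → E := fun i => v i - u i with hd
    have hdrec : ∀ i, d (i+1) = A i (d i) := by
      intro i
      simp only [hd, hvrec i, hurec i, map_sub]
      abel
    have hdphi : ∀ i, d i = Phi A i 0 (d 0) := traj_eq A d hdrec
    have hu0 : u 0 = 0 := by
      simp [hu, hczero 0 (Nat.zero_le n)]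
    have hd0 : d 0 = v 0 := by simp [hd, hu0]
    obtain ⟨Mx, hMx⟩ := hξ
    have hMx0 : 0 ≤ Mx := le_trans (norm_nonneg _) (hMx 0)
    have hcj : ∀ i, c i ≤ c j := by
      intro i
      simp only [hc, min_self]
      apply Finset.sum_le_sum_of_subset_of_nonneg
      · exact Finset.Icc_subset_Icc_right (min_le_right i j)
      · intro t _ _
        positivity
    have hub : ∀ i, ‖u i‖ ≤ c j * Mx := by
      intro i
      simp only [hu]
      rw [norm_smul, Real.norm_eq_abs, abs_of_nonneg (hcnonneg i)]
      exact mul_le_mul (hcj i) (hMx i) (norm_nonneg _) (le_trans (hcnonneg i) (hcj i))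
    have hLb : ∀ i, ‖v i‖ ≤ L := by
      intro i
      have := hvb i
      simpa using this
    have hd0S : d 0 ∈ Sset A := by
      refine ⟨L + c j * Mx, fun i => ?_⟩
      rw [← hdphi i]
      calc ‖d i‖ ≤ ‖v i‖ + ‖u i‖ := norm_sub_le _ _
      _ ≤ L + c j * Mx := add_le_add (hLb i) (hub i)
    have hdj : ‖d j‖ ≤ K * L := by
      rw [hdphi j]
      calc ‖Phi A j 0 (d 0)‖ ≤ K * ‖d 0‖ := hK0 _ hd0S j
      _ ≤ K * L := by
          apply mul_le_mul_of_nonneg_left _ (by linarith)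
          rw [hd0]; exact hLb 0
    have huj : ‖u j‖ ≤ L + K * L := by
      have h1 : u j = v j - d j := by simp [hd]
      rw [h1]
      calc ‖v j - d j‖ ≤ ‖v j‖ + ‖d j‖ := norm_sub_le _ _
      _ ≤ L + K * L := add_le_add (hLb j) hdj
    have hujeq : ‖u j‖ = c j * ‖x j‖ := by
      simp only [hu]
      rw [norm_smul, Real.norm_eq_abs, abs_of_nonneg (hcnonneg j)]
    have hcjeq : c j = ∑ i ∈ Finset.Icc (n+1) j, ‖x i‖⁻¹ := by
      simp [hc, min_self]
    calc (∑ i ∈ Finset.Icc (n+1) j, ‖x i‖⁻¹) * ‖x j‖ = c j * ‖x j‖ := by rw [hcjeq]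
    _ = ‖u j‖ := hujeq.symm
    _ ≤ L + K * L := huj
    _ = Cst := by rw [hCst]; ring
  -- now derive the exponential decay
  refine ⟨D, θ, hD1, ⟨hθpos, hθlt⟩, ?_⟩
  intro ξ hξ n j hnj
  by_cases hξ0 : ξ = 0
  · subst hξ0
    simp only [map_zero, norm_zero]
    positivity
  set x : ℕ → E := fun i => Phi A i 0 ξ with hx
  have hx0 : ∀ i, x i ≠ 0 := by
    intro i h
    exact hξ0 (phi_injective A i 0 h)
  have hxpos : ∀ i, 0 < ‖x i‖ := fun i => norm_pos_iff.2 (hx0 i)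
  rcases eq_or_lt_of_le hnj with h | hlt
  · subst h
    have h1 : D * θ ^ (n - n) * ‖x n‖ = D * ‖x n‖ := by
      rw [Nat.sub_self, pow_zero, mul_one]
    show ‖x n‖ ≤ D * θ ^ (n - n) * ‖x n‖
    rw [h1]
    nlinarith [hxpos n]
  · set b : ℕ → ℝ := fun r => ∑ t ∈ Finset.Icc (n+1) r, ‖x t‖⁻¹ with hb
    have hbpos : ∀ r, n + 1 ≤ r → 0 < b r := by
      intro r hr
      apply Finset.sum_pos
      · intro t _
        exact inv_pos.2 (hxpos t)
      · exact ⟨n+1, Finset.mem_Icc.2 ⟨le_refl _, hr⟩⟩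
    have hkey : ∀ r, n < r → b r * ‖x r‖ ≤ Cst := fun r hr => key ξ hξ hξ0 n r hr
    have hbstep : ∀ r, n + 1 ≤ r → b r ≤ θ * b (r+1) := by
      intro r hr
      have h1 : b (r+1) = b r + ‖x (r+1)‖⁻¹ := Finset.sum_Icc_succ_top (by omega) _
      have h2 : b (r+1) * ‖x (r+1)‖ ≤ Cst := hkey (r+1) (by omega)
      have h3 : 0 < b (r+1) := hbpos (r+1) (by omega)
      have h4 : b (r+1) / Cst ≤ ‖x (r+1)‖⁻¹ := by
        rw [inv_eq_one_div, div_le_div_iff₀ hCstpos (hxpos (r+1))]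
        linarith [h2]
      have h5 : θ * b (r+1) = b (r+1) - b (r+1) / Cst := by
        simp only [hθ]
        ring
      rw [h5]
      linarith [h1, h4]
    have hbgeo : ∀ p : ℕ, b (n+1) ≤ θ ^ p * b (n+1+p) := by
      intro p
      induction p with
      | zero => simp
      | succ p ih =>
          calc b (n+1) ≤ θ ^ p * b (n+1+p) := ih
          _ ≤ θ ^ p * (θ * b (n+1+p+1)) := by
              apply mul_le_mul_of_nonneg_left (hbstep (n+1+p) (by omega)) (by positivity)
          _ = θ ^ (p+1) * b (n+1+(p+1)) := by ring
    have hbn1 : b (n+1) = ‖x (n+1)‖⁻¹ := by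
      simp [hb]
    have hp := hbgeo (j - (n+1))
    have hj : n + 1 + (j - (n+1)) = j := by omega
    rw [hj] at hp
    have hbjpos : 0 < b j := hbpos j (by omega)
    have h6 : ‖x j‖ ≤ Cst / b j := by
      rw [le_div_iff₀ hbjpos]
      calc ‖x j‖ * b j = b j * ‖x j‖ := by ring
      _ ≤ Cst := hkey j hlt
    have h7 : Cst / b j ≤ Cst * θ ^ (j - (n+1)) / b (n+1) := by
      rw [div_le_div_iff₀ hbjpos (hbpos (n+1) (le_refl _))]
      calc Cst * b (n+1) ≤ Cst * (θ ^ (j - (n+1)) * b j) := by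
            apply mul_le_mul_of_nonneg_left hp (by positivity)
      _ = Cst * θ ^ (j - (n+1)) * b j := by ring
    have h8 : Cst * θ ^ (j - (n+1)) / b (n+1) = Cst * θ ^ (j - (n+1)) * ‖x (n+1)‖ := by
      rw [hbn1, div_eq_mul_inv, inv_inv]
    have hxrec1 : x (n+1) = A n (x n) := phi_nat_succ A n ξ
    have h9 : ‖x (n+1)‖ ≤ N₁ * ‖x n‖ := by
      rw [hxrec1]
      exact hstep n (x n)
    have hpow : D * θ ^ (j - n) = Cst * N₁ * θ ^ (j - (n+1)) := by
      have hjn : j - n = (j - (n+1)) + 1 := by omega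
      rw [hjn, pow_succ, hD]
      field_simp
    calc ‖x j‖ ≤ Cst / b j := h6
    _ ≤ Cst * θ ^ (j - (n+1)) / b (n+1) := h7
    _ = Cst * θ ^ (j - (n+1)) * ‖x (n+1)‖ := h8
    _ ≤ Cst * θ ^ (j - (n+1)) * (N₁ * ‖x n‖) := by
        apply mul_le_mul_of_nonneg_left h9 (by positivity)
    _ = D * θ ^ (j - n) * ‖x n‖ := by rw [hpow]; ring

lemma phi_nat_succ' (q : ℕ) (t : ℤ) (ξ : E) :
    Phi A ((q + 1 : ℕ) : ℤ) t ξ = A q (Phi A q t ξ) := by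
  have h : ((q + 1 : ℕ) : ℤ) = (q : ℤ) + 1 := by push_cast; ring
  rw [h, phi_succ_apply]

/-- The stable subspace transported to time `i`. -/
noncomputable def SsetAt (i : ℤ) : Submodule ℝ E := (Sset A).map ((Phi A i 0 : E →L[ℝ] E) : E →ₗ[ℝ] E)

lemma mem_SsetAt {i : ℤ} {ξ : E} : ξ ∈ SsetAt A i ↔ Phi A 0 i ξ ∈ Sset A := by
  constructor
  · rintro ⟨s, hs, rfl⟩
    have h1 : Phi A 0 i ((Phi A i 0 : E →L[ℝ] E) s) = s := phi_inv_apply A 0 i s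
    show Phi A 0 i ((Phi A i 0 : E →L[ℝ] E) s) ∈ Sset A
    rw [h1]
    exact hs
  · intro h
    exact ⟨Phi A 0 i ξ, h, phi_inv_apply A i 0 ξ⟩

lemma phi_mem_SsetAt {i j : ℤ} {ξ : E} (h : ξ ∈ SsetAt A i) : Phi A j i ξ ∈ SsetAt A j := by
  rw [mem_SsetAt] at h ⊢
  rw [phi_comp_apply]
  exact h

lemma SsetAt_closed (i : ℤ) : IsClosed ((SsetAt A i : Set E)) :=
  Submodule.closed_of_finiteDimensional _

lemma SsetAt_nonempty (i : ℤ) : (SsetAt A i : Set E).Nonempty :=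
  ⟨0, Submodule.zero_mem _⟩

lemma bounded_of_eventually_zero (u : ℕ → E) (l : ℕ) (h : ∀ q, l ≤ q → u q = 0) :
    ∃ c : ℝ, ∀ q, ‖u q‖ ≤ c := by
  refine ⟨∑ q ∈ Finset.range l, ‖u q‖, fun q => ?_⟩
  rcases lt_or_ge q l with hq | hq
  · exact Finset.single_le_sum (f := fun q => ‖u q‖) (fun t _ => norm_nonneg _)
      (Finset.mem_range.2 hq)
  · rw [h q hq, norm_zero]
    exact Finset.sum_nonneg (fun t _ => norm_nonneg _)

lemma sum_Icc_split {M : Type*} [AddCommMonoid M] (f : ℕ → M) (a b : ℕ) (h : a ≤ b) :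
    ∑ i ∈ Finset.Icc a b, f i = f a + ∑ i ∈ Finset.Icc (a+1) b, f i := by
  have h1 : Finset.Icc a b = insert a (Finset.Icc (a+1) b) := by
    ext t
    simp only [Finset.mem_Icc, Finset.mem_insert]
    omega
  rw [h1, Finset.sum_insert (by simp only [Finset.mem_Icc]; omega)]

lemma growth (L : ℝ) (hL : 1 ≤ L)
    (hSOLV : ∀ (w : ℕ → E) (c : ℝ), (∀ k, ‖w k‖ ≤ c) →
      ∃ v : ℕ → E, (∀ k, ‖v k‖ ≤ L * c) ∧ ∀ k : ℕ, v (k + 1) = A k (v k) + w k) :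
    ∀ (η : E) (k l : ℕ), k ≤ l →
      Metric.infDist (Phi A k 0 η) (SsetAt A k) ≤
        (L + 1) * (L / (L + 1)) ^ (l - k) * Metric.infDist (Phi A l 0 η) (SsetAt A l) := by
  classical
  have hLpos : (0:ℝ) < L := by linarith
  have hL1pos : (0:ℝ) < L + 1 := by linarith
  set μ : ℝ := L / (L + 1) with hμ
  have hμpos : 0 < μ := by positivity
  intro η k l hkl
  set y : ℕ → E := fun i => Phi A i 0 η with hy
  set δ : ℕ → ℝ := fun i => Metric.infDist (y i) (SsetAt A i) with hδ
  have hδnonneg : ∀ i, 0 ≤ δ i := fun i => Metric.infDist_nonneg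
  show δ k ≤ (L + 1) * μ ^ (l - k) * δ l
  by_cases hzero : ∃ i, k + 1 ≤ i ∧ i ≤ l ∧ y i ∈ SsetAt A i
  · obtain ⟨i, _, _, hyi⟩ := hzero
    have hη : η ∈ Sset A := by
      have h1 := (mem_SsetAt A).1 hyi
      have h2 : Phi A 0 i (y i) = η := phi_comp_apply A 0 i 0 η
      rw [h2] at h1
      exact h1
    have hyk : y k ∈ SsetAt A k := ⟨η, hη, rfl⟩
    have hδk : δ k = 0 := Metric.infDist_zero_of_mem hyk
    rw [hδk]
    exact mul_nonneg (mul_nonneg hL1pos.le (by positivity)) (hδnonneg l)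
  · push_neg at hzero
    have hδpos : ∀ i, k + 1 ≤ i → i ≤ l → 0 < δ i := by
      intro i h1 h2
      exact ((SsetAt_closed A i).notMem_iff_infDist_pos (SsetAt_nonempty A i)).1
        (hzero i h1 h2)
    rcases eq_or_lt_of_le hkl with rfl | hkltl
    · have h1 : (L + 1) * μ ^ (k - k) * δ k = (L + 1) * δ k := by
        rw [Nat.sub_self, pow_zero, mul_one]
      rw [h1]
      nlinarith [hδnonneg k]
    · have hmin : ∀ i : ℕ, ∃ si, si ∈ SsetAt A i ∧ δ i = dist (y i) si := by
        intro i
        obtain ⟨si, hsi, hd⟩ := (SsetAt_closed A i).exists_infDist_eq_dist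
          (SsetAt_nonempty A i) (y i)
        exact ⟨si, hsi, hd⟩
      choose s hs hsd using hmin
      have hyrec : ∀ i, y (i + 1) = A i (y i) := fun i => phi_nat_succ' A i 0 η
      have hscast : ∀ i : ℕ, s (i+1) ∈ SsetAt A ((i:ℤ)+1) := by
        intro i
        have h1 : ((i+1 : ℕ) : ℤ) = (i:ℤ)+1 := by push_cast; ring
        have := hs (i+1)
        rwa [h1] at this
      -- the fundamental estimate
      have key2 : ∀ r, k ≤ r → r < l →
          (∑ i ∈ Finset.Icc r (l-1), (δ (i+1))⁻¹) * δ r ≤ L := by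
        intro r hkr hrl
        set w : ℕ → E := fun i => if r ≤ i ∧ i < l then
          (δ (i+1))⁻¹ • (y (i+1) - s (i+1)) else 0 with hw
        have hwb : ∀ i, ‖w i‖ ≤ 1 := by
          intro i
          simp only [hw]
          split
          · rename_i hcond
            have hp : 0 < δ (i+1) := hδpos (i+1) (by omega) (by omega)
            rw [norm_smul, Real.norm_eq_abs, abs_of_nonneg (by positivity)]
            rw [← dist_eq_norm, ← hsd (i+1)]
            rw [inv_mul_cancel₀ hp.ne']
          · simp
        obtain ⟨v, hvb, hvrec⟩ := hSOLV w 1 hwb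
        have hLb : ∀ i, ‖v i‖ ≤ L := by
          intro i; simpa using hvb i
        set u : ℕ → E := fun q => -∑ i ∈ Finset.Icc (max q r) (l-1),
          (δ (i+1))⁻¹ • (y q - Phi A q ((i:ℤ)+1) (s (i+1))) with hu
        have hurec : ∀ q, u (q+1) = A q (u q) + w q := by
          intro q
          have hAu : A q (u q) = -∑ i ∈ Finset.Icc (max q r) (l-1),
              (δ (i+1))⁻¹ • (y (q+1) - Phi A ((q+1 : ℕ) : ℤ) ((i:ℤ)+1) (s (i+1))) := by
            simp only [hu, map_neg, map_sum, map_smul, map_sub]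
            congr 1
            apply Finset.sum_congr rfl
            intro i _
            rw [hyrec q, phi_nat_succ']
          rcases lt_or_ge q r with hqr | hqr
          · have h1 : max q r = r := by omega
            have h2 : max (q+1) r = r := by omega
            have h3 : w q = 0 := by
              simp only [hw, if_neg (by omega : ¬ (r ≤ q ∧ q < l))]
            rw [h3, add_zero, hAu, h1]
            simp only [hu, h2]
          · rcases lt_or_ge q l with hql | hql
            · have h1 : max q r = q := by omega
              have h2 : max (q+1) r = q+1 := by omega
              have h3 : w q = (δ (q+1))⁻¹ • (y (q+1) - s (q+1)) := by
                simp only [hw, if_pos (⟨hqr, hql⟩ : r ≤ q ∧ q < l)]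
              have hqq : Phi A ((q+1 : ℕ) : ℤ) ((q:ℤ)+1) (s (q+1)) = s (q+1) := by
                have hc : ((q+1 : ℕ) : ℤ) = (q:ℤ)+1 := by push_cast; ring
                rw [hc, phi_self]
                rfl
              rw [hAu, h1, h3]
              rw [sum_Icc_split (fun i => (δ (i+1))⁻¹ •
                (y (q+1) - Phi A ((q+1 : ℕ) : ℤ) ((i:ℤ)+1) (s (i+1)))) q (l-1) (by omega)]
              simp only [hu, h2, hqq]
              abel
            · have h1 : Finset.Icc (max q r) (l-1) = ∅ := Finset.Icc_eq_empty (by omega)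
              have h2 : Finset.Icc (max (q+1) r) (l-1) = ∅ := Finset.Icc_eq_empty (by omega)
              have h3 : w q = 0 := by
                simp only [hw, if_neg (by omega : ¬ (r ≤ q ∧ q < l))]
              rw [h3, add_zero, hAu, h1]
              simp only [hu, h2, Finset.sum_empty, neg_zero]
        have huz : ∀ q, l ≤ q → u q = 0 := by
          intro q hq
          simp only [hu, Finset.Icc_eq_empty (by omega : ¬ (max q r ≤ l-1)),
            Finset.sum_empty, neg_zero]
        obtain ⟨cu, hub⟩ := bounded_of_eventually_zero u l huz
        set d : ℕ → E := fun q => v q - u q with hd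
        have hdrec : ∀ q, d (q+1) = A q (d q) := by
          intro q
          simp only [hd, hvrec q, hurec q, map_sub]
          abel
        have hdphi : ∀ q, d q = Phi A q 0 (d 0) := traj_eq A d hdrec
        have hd0S : d 0 ∈ Sset A := by
          refine ⟨L + cu, fun i => ?_⟩
          rw [← hdphi i]
          calc ‖d i‖ ≤ ‖v i‖ + ‖u i‖ := norm_sub_le _ _
          _ ≤ L + cu := add_le_add (hLb i) (hub i)
        have hdrS : d r ∈ SsetAt A r := by
          rw [hdphi r]
          exact ⟨d 0, hd0S, rfl⟩
        set β : ℝ := ∑ i ∈ Finset.Icc r (l-1), (δ (i+1))⁻¹ with hβ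
        have hβpos : 0 < β := by
          apply Finset.sum_pos
          · intro i hi
            rw [Finset.mem_Icc] at hi
            exact inv_pos.2 (hδpos (i+1) (by omega) (by omega))
          · exact ⟨r, Finset.mem_Icc.2 ⟨le_refl _, by omega⟩⟩
        set q0 : E := (∑ i ∈ Finset.Icc r (l-1),
          (δ (i+1))⁻¹ • Phi A r ((i:ℤ)+1) (s (i+1))) + d r with hq0
        have hur : u r = -(β • y r) + ∑ i ∈ Finset.Icc r (l-1),
            (δ (i+1))⁻¹ • Phi A r ((i:ℤ)+1) (s (i+1)) := by
          simp only [hu, max_self, smul_sub]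
          rw [Finset.sum_sub_distrib, ← Finset.sum_smul]
          abel
        have h5 : β • y r - q0 = - v r := by
          have hvr : v r = u r + d r := by simp only [hd]; abel
          rw [hq0, hvr, hur]
          abel
        have hq0mem : q0 ∈ SsetAt A r := by
          apply Submodule.add_mem
          · apply Submodule.sum_mem
            intro i _
            exact Submodule.smul_mem _ _ (phi_mem_SsetAt A (hscast i))
          · exact hdrS
        have h6 : δ r ≤ β⁻¹ * L := by
          have hmem : β⁻¹ • q0 ∈ SsetAt A r := Submodule.smul_mem _ _ hq0mem
          calc δ r ≤ dist (y r) (β⁻¹ • q0) := Metric.infDist_le_dist_of_mem hmem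
          _ = ‖y r - β⁻¹ • q0‖ := dist_eq_norm _ _
          _ = β⁻¹ * ‖β • y r - q0‖ := by
              rw [show y r - β⁻¹ • q0 = β⁻¹ • (β • y r - q0) by
                rw [smul_sub, smul_smul, inv_mul_cancel₀ hβpos.ne', one_smul]]
              rw [norm_smul, Real.norm_eq_abs, abs_of_nonneg (by positivity)]
          _ ≤ β⁻¹ * L := by
              rw [h5, norm_neg]
              exact mul_le_mul_of_nonneg_left (hLb r) (by positivity)
        show β * δ r ≤ L
        calc β * δ r ≤ β * (β⁻¹ * L) := mul_le_mul_of_nonneg_left h6 hβpos.le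
        _ = L := by
            rw [← mul_assoc, mul_inv_cancel₀ hβpos.ne', one_mul]
      -- iterate the fundamental estimate
      set B : ℕ → ℝ := fun r => ∑ i ∈ Finset.Icc r (l-1), (δ (i+1))⁻¹ with hB
      have hδl : 0 < δ l := hδpos l (by omega) (le_refl _)
      have hgeo : ∀ p, p ≤ l-1-k → (1 + 1/L) ^ p * (δ l)⁻¹ ≤ B (l-1-p) := by
        intro p
        induction p with
        | zero =>
            intro _
            have h1 : B (l-1) = (δ l)⁻¹ := by
              have h2 : l - 1 + 1 = l := by omega
              simp only [hB, Nat.sub_zero, Finset.Icc_self, Finset.sum_singleton, h2]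
            simp only [Nat.sub_zero, pow_zero, one_mul]
            rw [h1]
        | succ p ih =>
            intro hp
            set r : ℕ := l - 1 - (p+1) with hr
            have hrk : k ≤ r := by omega
            have hr1 : r + 1 = l - 1 - p := by omega
            have hδr1 : 0 < δ (r+1) := hδpos (r+1) (by omega) (by omega)
            have hsplit : B r = (δ (r+1))⁻¹ + B (r+1) := by
              simp only [hB]
              exact sum_Icc_split _ r (l-1) (by omega)
            have hkey := key2 (r+1) (by omega) (by omega)
            have hBr1 : B (r+1) * δ (r+1) ≤ L := hkey
            have hBr1nonneg : 0 ≤ B (r+1) := by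
              apply Finset.sum_nonneg
              intro i _
              exact inv_nonneg.2 (hδnonneg _)
            have hinv : B (r+1) / L ≤ (δ (r+1))⁻¹ := by
              rw [inv_eq_one_div, div_le_div_iff₀ hLpos hδr1]
              linarith
            have hih : (1 + 1/L) ^ p * (δ l)⁻¹ ≤ B (r+1) := by
              rw [hr1]
              exact ih (by omega)
            calc (1 + 1/L) ^ (p+1) * (δ l)⁻¹
                = (1 + 1/L) * ((1 + 1/L) ^ p * (δ l)⁻¹) := by ring
            _ ≤ (1 + 1/L) * B (r+1) := by
                apply mul_le_mul_of_nonneg_left hih (by positivity)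
            _ = B (r+1) + B (r+1) / L := by ring
            _ ≤ (δ (r+1))⁻¹ + B (r+1) := by linarith
            _ = B r := hsplit.symm
      have hfin : B k * δ k ≤ L := key2 k (le_refl _) hkltl
      have hgk : (1 + 1/L) ^ (l-1-k) * (δ l)⁻¹ ≤ B k := by
        have := hgeo (l-1-k) (le_refl _)
        have h1 : l - 1 - (l-1-k) = k := by omega
        rwa [h1] at this
      set p : ℕ := l - 1 - k with hpdef
      have hlk : l - k = p + 1 := by omega
      have h7 : δ k * ((1 + 1/L) ^ p * (δ l)⁻¹) ≤ L := by
        calc δ k * ((1 + 1/L) ^ p * (δ l)⁻¹) ≤ δ k * B k := by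
              apply mul_le_mul_of_nonneg_left hgk (hδnonneg k)
        _ = B k * δ k := by ring
        _ ≤ L := hfin
      have h8 : δ k * (1 + 1/L) ^ p ≤ L * δ l := by
        have h81 := mul_le_mul_of_nonneg_right h7 hδl.le
        calc δ k * (1 + 1/L) ^ p
            = δ k * ((1 + 1/L) ^ p * (δ l)⁻¹) * δ l := by
              rw [mul_assoc, mul_assoc, inv_mul_cancel₀ hδl.ne', mul_one]
        _ ≤ L * δ l := h81
      have hμν : (1 + 1/L) * μ = 1 := by
        rw [hμ]
        field_simp
      have h9 : δ k = δ k * (1 + 1/L) ^ p * μ ^ p := by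
        rw [mul_assoc, ← mul_pow, hμν, one_pow, mul_one]
      have hLμ : (L + 1) * μ ^ (p+1) = L * μ ^ p := by
        have h10 : (L + 1) * μ = L := by
          rw [hμ]
          field_simp
        rw [pow_succ, show (L+1) * (μ^p * μ) = ((L+1) * μ) * μ^p by ring, h10]
      rw [hlk, hLμ]
      calc δ k = δ k * (1 + 1/L) ^ p * μ ^ p := h9
      _ ≤ L * δ l * μ ^ p := by
          apply mul_le_mul_of_nonneg_right h8 (by positivity)
      _ = L * μ ^ p * δ l := by ring

lemma traj_upto (y : ℕ → E) (t : ℕ) (hy : ∀ i, i < t → y (i+1) = A i (y i)) :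
    ∀ i, i ≤ t → y i = Phi A i 0 (y 0) := by
  intro i
  induction i with
  | zero => intro _; simp [phi_self]
  | succ i ih =>
      intro hit
      rw [hy i (by omega), ih (by omega), ← phi_nat_succ']

theorem hyperbolicOnPlusRay_of_bounded_solvability'
    (N : ℝ) (hN : 0 < N)
    (hA : ∀ k : ℤ, ‖(A k : E →L[ℝ] E)‖ ≤ N)
    (hsolv : ∀ w : ℤ → E, (∃ C : ℝ, ∀ k : ℤ, ‖w k‖ ≤ C) →
      ∃ v : ℤ → E, (∃ C : ℝ, ∀ k : ℤ, ‖v k‖ ≤ C) ∧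
        ∀ k : ℤ, v (k + 1) = A k (v k) + w k) :
    HyperbolicOnPlusRay A := by
  classical
  set N₁ : ℝ := max N 1 with hN₁def
  have hN₁ : 1 ≤ N₁ := le_max_right _ _
  have hstep : ∀ (k : ℕ) (x : E), ‖A k x‖ ≤ N₁ * ‖x‖ := by
    intro k x
    calc ‖A k x‖ = ‖(A k : E →L[ℝ] E) x‖ := rfl
    _ ≤ ‖(A k : E →L[ℝ] E)‖ * ‖x‖ := (A k : E →L[ℝ] E).le_opNorm x
    _ ≤ N₁ * ‖x‖ := by
        apply mul_le_mul_of_nonneg_right (le_trans (hA _) (le_max_left _ _)) (norm_nonneg _)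
  obtain ⟨L, hL, hSOLV⟩ := exists_L A N hN hA hsolv
  have hLpos : (0:ℝ) < L := by linarith
  obtain ⟨D, θ, hD1, hθmem, hdecay⟩ := exists_decay A L N₁ hL hN₁ hstep hSOLV
  obtain ⟨hθpos, hθlt⟩ := hθmem
  have hgrowth := growth A L hL hSOLV
  set μ : ℝ := L / (L + 1) with hμdef
  have hμpos : 0 < μ := by positivity
  have hμlt : μ < 1 := by
    rw [hμdef, div_lt_one (by linarith)]
    linarith
  -- the projection at time 0
  obtain ⟨V, hV⟩ := Submodule.exists_isCompl (Sset A)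
  set P0 : E →L[ℝ] E := LinearMap.toContinuousLinearMap
    ((Sset A).subtype.comp ((Sset A).linearProjOfIsCompl V hV)) with hP0def
  have hP0mem : ∀ x : E, P0 x ∈ Sset A := fun x => ((Sset A).linearProjOfIsCompl V hV x).2
  have hP0id : ∀ x ∈ Sset A, P0 x = x := by
    intro x hx
    have h1 : ((Sset A).linearProjOfIsCompl V hV) x = ⟨x, hx⟩ :=
      Submodule.linearProjOfIsCompl_apply_left hV ⟨x, hx⟩
    show ((Sset A).subtype (((Sset A).linearProjOfIsCompl V hV) x)) = x
    rw [h1]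
    rfl
  have hP0proj : ∀ x : E, P0 (P0 x) = P0 x := fun x => hP0id _ (hP0mem x)
  have hP0n : (0:ℝ) ≤ ‖P0‖ := norm_nonneg _
  set MP : ℝ := L * (1 + D * ‖P0‖) + ‖P0‖ + 1 with hMPdef
  have hMPpos : 0 < MP := by
    have h1 : 0 ≤ D * ‖P0‖ := mul_nonneg (by linarith) hP0n
    rw [hMPdef]
    nlinarith
  -- the family of projections
  set P : ℤ → (E →L[ℝ] E) := fun l => (Phi A l 0).comp (P0.comp (Phi A 0 l)) with hPdef
  have hPapply : ∀ (l : ℤ) (v : E), P l v = Phi A l 0 (P0 (Phi A 0 l v)) := fun _ _ => rfl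
  have hPid : ∀ (l : ℤ) (x : E), x ∈ SsetAt A l → P l x = x := by
    intro l x hx
    obtain ⟨x0, hx0, rfl⟩ := hx
    show Phi A l 0 (P0 (Phi A 0 l (Phi A l 0 x0))) = Phi A l 0 x0
    rw [phi_inv_apply, hP0id x0 hx0]
  have hPzero : ∀ (l : ℤ) (x : E), P0 (Phi A 0 l x) = 0 → P l x = 0 := by
    intro l x h
    rw [hPapply, h, map_zero]
  -- uniform bound for the projections
  have hPbound : ∀ l : ℤ, 0 ≤ l → ∀ v : E, ‖P l v‖ ≤ MP * ‖v‖ := by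
    intro l hl v
    rcases eq_or_lt_of_le hl with rfl | hlpos
    · have h1 : P 0 v = P0 v := by
        rw [hPapply]
        have h2 : Phi A 0 0 v = v := by rw [phi_self]; rfl
        rw [h2]
        have h3 : Phi A 0 0 (P0 v) = P0 v := by rw [phi_self]; rfl
        rw [h3]
      rw [h1]
      calc ‖P0 v‖ ≤ ‖P0‖ * ‖v‖ := P0.le_opNorm v
      _ ≤ MP * ‖v‖ := by
          apply mul_le_mul_of_nonneg_right _ (norm_nonneg _)
          have h1 : 0 ≤ D * ‖P0‖ := mul_nonneg (by linarith) hP0n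
          have h2 : 0 < L * (1 + D * ‖P0‖) := mul_pos hLpos (by linarith)
          rw [hMPdef]
          linarith
    · set n : ℕ := l.toNat with hndef
      have hn : (n : ℤ) = l := Int.toNat_of_nonneg hl
      have hn1 : 1 ≤ n := by omega
      set w : ℕ → E := fun i => if i = n - 1 then v else 0 with hw
      have hwb : ∀ i, ‖w i‖ ≤ ‖v‖ := by
        intro i
        simp only [hw]
        split
        · exact le_refl _
        · simp
      obtain ⟨h, hhb, hhrec⟩ := hSOLV w ‖v‖ hwb
      have hfwd : ∀ i, n ≤ i → h i = Phi A i n (h n) := by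
        intro i hi
        induction i, hi using Nat.le_induction with
        | base =>
            have : Phi A (n:ℤ) (n:ℤ) (h n) = h n := by rw [phi_self]; rfl
            rw [this]
        | succ i hi ih =>
            have hwi : w i = 0 := by
              simp only [hw, if_neg (by omega : ¬ i = n - 1)]
            rw [hhrec i, hwi, add_zero, ih, ← phi_nat_succ']
      have hbwd : ∀ i, i ≤ n - 1 → h i = Phi A i 0 (h 0) := by
        apply traj_upto
        intro i hi
        have hwi : w i = 0 := by
          simp only [hw, if_neg (by omega : ¬ i = n - 1)]
        rw [hhrec i, hwi, add_zero]
      have hLv : ∀ i, ‖h i‖ ≤ L * ‖v‖ := hhb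
      have hsS : Phi A 0 n (h n) ∈ Sset A := by
        refine ⟨L * ‖v‖ + ∑ j ∈ Finset.range n, ‖Phi A (j:ℕ) (n:ℤ) (h n)‖, fun j => ?_⟩
        rw [phi_comp_apply]
        rcases le_or_gt n j with hj | hj
        · rw [← hfwd j hj]
          have : (0:ℝ) ≤ ∑ j ∈ Finset.range n, ‖Phi A (j:ℕ) (n:ℤ) (h n)‖ :=
            Finset.sum_nonneg (fun t _ => norm_nonneg _)
          linarith [hLv j]
        · have h1 : ‖Phi A (j:ℕ) (n:ℤ) (h n)‖ ≤
              ∑ j ∈ Finset.range n, ‖Phi A (j:ℕ) (n:ℤ) (h n)‖ :=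
            Finset.single_le_sum (f := fun j => ‖Phi A (j:ℕ) (n:ℤ) (h n)‖)
              (fun t _ => norm_nonneg _) (Finset.mem_range.2 hj)
          have h2 : (0:ℝ) ≤ L * ‖v‖ := by positivity
          linarith
      have hPsn : P l (h n) = h n := by
        apply hPid
        rw [← hn]
        exact (mem_SsetAt A).2 hsS
      -- the complementary part
      have hrecn : h n = A (n-1 : ℕ) (h (n-1)) + v := by
        have h1 := hhrec (n-1)
        have h2 : n - 1 + 1 = n := by omega
        have h3 : w (n-1) = v := by simp only [hw, if_pos rfl]
        rw [h2, h3] at h1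
        exact h1
      have hz : Phi A 0 l (v - h n) = - h 0 := by
        have h1 : v - h n = -(A (n-1 : ℕ) (h (n-1))) := by
          rw [hrecn]; abel
        have h2 : A (n-1 : ℕ) (h (n-1)) = Phi A (n:ℤ) ((n-1 : ℕ):ℤ) (h (n-1)) := by
          have h3 : ((n-1)+1 : ℕ) = n := by omega
          have h4 := phi_nat_succ' A (n-1) ((n-1:ℕ):ℤ) (h (n-1))
          rw [h3] at h4
          have h5 : Phi A ((n-1:ℕ):ℤ) ((n-1:ℕ):ℤ) (h (n-1)) = h (n-1) := by
            rw [phi_self]; rfl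
          rw [h5] at h4
          exact h4.symm
        rw [h1, map_neg, h2, ← hn, phi_comp_apply]
        have h6 : h (n-1) = Phi A ((n-1:ℕ):ℤ) 0 (h 0) := hbwd (n-1) (le_refl _)
        rw [h6, phi_comp_apply, phi_self]
        rfl
      have hsplit : P l v = h n - Phi A l 0 (P0 (h 0)) := by
        have h1 : v = h n + (v - h n) := by abel
        calc P l v = P l (h n) + P l (v - h n) := by rw [← map_add, ← h1]
        _ = h n + Phi A l 0 (P0 (Phi A 0 l (v - h n))) := by rw [hPsn, hPapply]
        _ = h n + Phi A l 0 (P0 (- h 0)) := by rw [hz]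
        _ = h n - Phi A l 0 (P0 (h 0)) := by rw [map_neg, map_neg, sub_eq_add_neg]
      have hdec : ‖Phi A l 0 (P0 (h 0))‖ ≤ D * ‖P0 (h 0)‖ := by
        have hmem : P0 (h 0) ∈ Sset A := hP0mem _
        have h1 := hdecay _ hmem 0 n (Nat.zero_le n)
        have h2 : Phi A ((0:ℕ):ℤ) 0 (P0 (h 0)) = P0 (h 0) := by
          norm_num
          rw [phi_self]; rfl
        rw [h2] at h1
        have h3 : θ ^ (n - 0) ≤ 1 := by
          apply pow_le_one₀ hθpos.le hθlt.le
        calc ‖Phi A l 0 (P0 (h 0))‖ = ‖Phi A ((n:ℕ):ℤ) 0 (P0 (h 0))‖ := by rw [hn]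
        _ ≤ D * θ ^ (n - 0) * ‖P0 (h 0)‖ := h1
        _ ≤ D * 1 * ‖P0 (h 0)‖ := by
            apply mul_le_mul_of_nonneg_right _ (norm_nonneg _)
            apply mul_le_mul_of_nonneg_left h3 (by linarith)
        _ = D * ‖P0 (h 0)‖ := by ring
      calc ‖P l v‖ = ‖h n - Phi A l 0 (P0 (h 0))‖ := by rw [hsplit]
      _ ≤ ‖h n‖ + ‖Phi A l 0 (P0 (h 0))‖ := norm_sub_le _ _
      _ ≤ L * ‖v‖ + D * ‖P0 (h 0)‖ := add_le_add (hLv n) hdec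
      _ ≤ L * ‖v‖ + D * (‖P0‖ * (L * ‖v‖)) := by
          apply add_le_add le_rfl
          apply mul_le_mul_of_nonneg_left _ (by linarith)
          calc ‖P0 (h 0)‖ ≤ ‖P0‖ * ‖h 0‖ := P0.le_opNorm _
          _ ≤ ‖P0‖ * (L * ‖v‖) := mul_le_mul_of_nonneg_left (hLv 0) hP0n
      _ ≤ MP * ‖v‖ := by
          rw [hMPdef]
          nlinarith [norm_nonneg v]
  -- assemble the hyperbolicity data
  set lam : ℝ := max θ μ with hlamdef
  have hlampos : 0 < lam := lt_of_lt_of_le hθpos (le_max_left _ _)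
  have hlamlt : lam < 1 := max_lt hθlt hμlt
  set C : ℝ := D * MP + (1 + MP) * ((L + 1) * (1 + MP)) + 1 with hCdef
  have hDMP : 0 ≤ D * MP := mul_nonneg (by linarith) hMPpos.le
  have hBig : 0 ≤ (1 + MP) * ((L + 1) * (1 + MP)) :=
    mul_nonneg (by linarith) (mul_nonneg (by linarith) (by linarith))
  have hCpos : 0 < C := by rw [hCdef]; linarith
  refine ⟨C, lam, P, hCpos, ⟨hlampos, hlamlt⟩, ?_, ?_, ?_, ?_⟩
  · -- idempotency
    intro k _
    refine ContinuousLinearMap.ext fun v => ?_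
    show P k (P k v) = P k v
    simp only [hPapply]
    rw [phi_inv_apply A 0 k, hP0proj]
  · -- commutation
    intro k l _ _
    refine ContinuousLinearMap.ext fun v => ?_
    show P k (Phi A k l v) = Phi A k l (P l v)
    simp only [hPapply]
    rw [phi_comp_apply A 0 k l, phi_comp_apply A k l 0]
  · -- decay on the stable directions
    intro k l hl hlk v
    set ln : ℕ := l.toNat with hlndef
    set kn : ℕ := k.toNat with hkndef
    have hln : (ln : ℤ) = l := Int.toNat_of_nonneg hl
    have hkn : (kn : ℤ) = k := Int.toNat_of_nonneg (le_trans hl hlk)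
    have hlnkn : ln ≤ kn := by omega
    have hξmem : P0 (Phi A 0 l v) ∈ Sset A := hP0mem _
    have h1 : Phi A k l (P l v) = Phi A (kn:ℤ) 0 (P0 (Phi A 0 l v)) := by
      rw [hPapply, phi_comp_apply A k l 0, hkn]
    have h2 : Phi A (ln:ℤ) 0 (P0 (Phi A 0 l v)) = P l v := by
      rw [hln]
      exact (hPapply l v).symm
    have h3 := hdecay _ hξmem ln kn hlnkn
    rw [h2] at h3
    have h4 : ‖P l v‖ ≤ MP * ‖v‖ := hPbound l hl v
    have h5 : θ ^ (kn - ln) ≤ lam ^ (kn - ln) :=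
      pow_le_pow_left₀ hθpos.le (le_max_left _ _) _
    have h6 : (k - l).toNat = kn - ln := by omega
    rw [h1, h6]
    calc ‖Phi A (kn:ℤ) 0 (P0 (Phi A 0 l v))‖
        ≤ D * θ ^ (kn - ln) * ‖P l v‖ := h3
    _ ≤ D * θ ^ (kn - ln) * (MP * ‖v‖) := by
        apply mul_le_mul_of_nonneg_left h4 (by positivity)
    _ = (D * MP) * θ ^ (kn - ln) * ‖v‖ := by ring
    _ ≤ (D * MP) * lam ^ (kn - ln) * ‖v‖ := by
        apply mul_le_mul_of_nonneg_right _ (norm_nonneg _)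
        exact mul_le_mul_of_nonneg_left h5 hDMP
    _ ≤ C * lam ^ (kn - ln) * ‖v‖ := by
        apply mul_le_mul_of_nonneg_right _ (norm_nonneg _)
        apply mul_le_mul_of_nonneg_right _ (by positivity)
        rw [hCdef]
        linarith
  · -- expansion on the complementary directions
    intro k l hk hkl v
    set kn : ℕ := k.toNat with hkndef
    set ln : ℕ := l.toNat with hlndef
    have hkn : (kn : ℤ) = k := Int.toNat_of_nonneg hk
    have hln : (ln : ℤ) = l := Int.toNat_of_nonneg (le_trans hk hkl)
    have hknln : kn ≤ ln := by omega
    set ζ : E := (1 - P l) v with hζdef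
    have hζ : ζ = v - P l v := by
      rw [hζdef]
      simp [ContinuousLinearMap.sub_apply]
    set η0 : E := Phi A 0 l ζ with hη0
    have hP0η0 : P0 η0 = 0 := by
      have h1 : η0 = Phi A 0 l v - P0 (Phi A 0 l v) := by
        rw [hη0, hζ, map_sub, hPapply, phi_inv_apply]
      rw [h1, map_sub, hP0proj, sub_self]
    have hyk : Phi A k l ζ = Phi A (kn:ℤ) 0 η0 := by
      rw [hkn, hη0, phi_comp_apply A k 0 l]
    have hPky : P k (Phi A (kn:ℤ) 0 η0) = 0 := by
      rw [hPapply]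
      have h1 : Phi A 0 k (Phi A (kn:ℤ) 0 η0) = η0 := by
        rw [hkn]
        exact phi_inv_apply A 0 k η0
      rw [h1, hP0η0, map_zero]
    obtain ⟨sstar, hsmem, hsdist⟩ := (SsetAt_closed A kn).exists_infDist_eq_dist
      (SsetAt_nonempty A kn) (Phi A (kn:ℤ) 0 η0)
    have hPks : P k sstar = sstar := by
      apply hPid
      rw [← hkn]
      exact hsmem
    have hdiff : P k (Phi A (kn:ℤ) 0 η0 - sstar) = - sstar := by
      rw [map_sub, hPky, hPks, zero_sub]
    have hyknorm : ‖Phi A (kn:ℤ) 0 η0‖ ≤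
        (1 + MP) * Metric.infDist (Phi A (kn:ℤ) 0 η0) (SsetAt A kn) := by
      have h7 : Phi A (kn:ℤ) 0 η0 = (Phi A (kn:ℤ) 0 η0 - sstar)
          - P k (Phi A (kn:ℤ) 0 η0 - sstar) := by
        rw [hdiff]
        abel
      calc ‖Phi A (kn:ℤ) 0 η0‖
          = ‖(Phi A (kn:ℤ) 0 η0 - sstar) - P k (Phi A (kn:ℤ) 0 η0 - sstar)‖ := by rw [← h7]
      _ ≤ ‖Phi A (kn:ℤ) 0 η0 - sstar‖ + ‖P k (Phi A (kn:ℤ) 0 η0 - sstar)‖ := norm_sub_le _ _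
      _ ≤ ‖Phi A (kn:ℤ) 0 η0 - sstar‖ + MP * ‖Phi A (kn:ℤ) 0 η0 - sstar‖ :=
          add_le_add le_rfl (hPbound k hk _)
      _ = (1 + MP) * ‖Phi A (kn:ℤ) 0 η0 - sstar‖ := by ring
      _ = (1 + MP) * Metric.infDist (Phi A (kn:ℤ) 0 η0) (SsetAt A kn) := by
          rw [hsdist, dist_eq_norm]
    have hg := hgrowth η0 kn ln hknln
    have hyl : Phi A (ln:ℤ) 0 η0 = ζ := by
      rw [hln, hη0, phi_inv_apply]
    have hdl : Metric.infDist (Phi A (ln:ℤ) 0 η0) (SsetAt A ln) ≤ ‖ζ‖ := by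
      rw [hyl]
      calc Metric.infDist ζ (SsetAt A ln) ≤ dist ζ 0 :=
        Metric.infDist_le_dist_of_mem (Submodule.zero_mem _)
      _ = ‖ζ‖ := by rw [dist_zero_right]
    have hζnorm : ‖ζ‖ ≤ (1 + MP) * ‖v‖ := by
      rw [hζ]
      calc ‖v - P l v‖ ≤ ‖v‖ + ‖P l v‖ := norm_sub_le _ _
      _ ≤ ‖v‖ + MP * ‖v‖ := add_le_add le_rfl (hPbound l (le_trans hk hkl) v)
      _ = (1 + MP) * ‖v‖ := by ring
    have h5 : μ ^ (ln - kn) ≤ lam ^ (ln - kn) :=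
      pow_le_pow_left₀ hμpos.le (le_max_right _ _) _
    have h6 : (l - k).toNat = ln - kn := by omega
    have hinf_nonneg : (0:ℝ) ≤ Metric.infDist (Phi A (ln:ℤ) 0 η0) (SsetAt A ln) :=
      Metric.infDist_nonneg
    rw [hyk, h6]
    calc ‖Phi A (kn:ℤ) 0 η0‖
        ≤ (1 + MP) * Metric.infDist (Phi A (kn:ℤ) 0 η0) (SsetAt A kn) := hyknorm
    _ ≤ (1 + MP) * ((L + 1) * μ ^ (ln - kn) *
          Metric.infDist (Phi A (ln:ℤ) 0 η0) (SsetAt A ln)) := by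
        apply mul_le_mul_of_nonneg_left hg (by linarith)
    _ ≤ (1 + MP) * ((L + 1) * μ ^ (ln - kn) * ((1 + MP) * ‖v‖)) := by
        apply mul_le_mul_of_nonneg_left _ (by linarith)
        apply mul_le_mul_of_nonneg_left _ (by positivity)
        exact le_trans hdl (le_trans hζnorm (le_refl _))
    _ = ((1 + MP) * ((L + 1) * (1 + MP))) * μ ^ (ln - kn) * ‖v‖ := by ring
    _ ≤ ((1 + MP) * ((L + 1) * (1 + MP))) * lam ^ (ln - kn) * ‖v‖ := by
        apply mul_le_mul_of_nonneg_right _ (norm_nonneg _)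
        exact mul_le_mul_of_nonneg_left h5 hBig
    _ ≤ C * lam ^ (ln - kn) * ‖v‖ := by
        apply mul_le_mul_of_nonneg_right _ (norm_nonneg _)
        apply mul_le_mul_of_nonneg_right _ (by positivity)
        rw [hCdef]
        linarith

end Algebra

/-- If for every bounded sequence `{w_k}` the difference equation `v_{k+1} = A_k v_k + w_k`
has a bounded solution `{v_k}`, then the sequence `{A_k}` is hyperbolic on the ray `[0,+∞)`. -/


theorem hyperbolicOnPlusRay_of_bounded_solvability
    {m : ℕ} (A : ℤ → (EuclideanSpace ℝ (Fin m) ≃L[ℝ] EuclideanSpace ℝ (Fin m)))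
    (N : ℝ) (hN : 0 < N)
    (hA : ∀ k : ℤ, ‖(A k : EuclideanSpace ℝ (Fin m) →L[ℝ] EuclideanSpace ℝ (Fin m))‖ ≤ N)
    (hAinv : ∀ k : ℤ,
      ‖((A k).symm : EuclideanSpace ℝ (Fin m) →L[ℝ] EuclideanSpace ℝ (Fin m))‖ ≤ N)
    (hsolv : ∀ w : ℤ → EuclideanSpace ℝ (Fin m), (∃ C : ℝ, ∀ k : ℤ, ‖w k‖ ≤ C) →
      ∃ v : ℤ → EuclideanSpace ℝ (Fin m), (∃ C : ℝ, ∀ k : ℤ, ‖v k‖ ≤ C) ∧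
        ∀ k : ℤ, v (k + 1) = A k (v k) + w k) :
    HyperbolicOnPlusRay A := by
  exact hyperbolicOnPlusRay_of_bounded_solvability' A N hN hA hsolv
end

section
/- Let f : ℝ^m → ℝ^m be a C¹ diffeomorphism that has the Lipschitz shadowing property with constants 𝓛, d₀ > 0. Let p : ℤ → ℝ^m be a complete trajectory of f (i.e. p_{k+1} = f(p_k) for all k ∈ ℤ) and set A_k = Df(p_k). Assume there is a constant N > 0 with ‖A_k‖ ≤ N for all k ∈ ℤ, and that f is uniformly differentiable along the trajectory: for every μ > 0 there exists δ > 0 such that for all k ∈ ℤ and all v ∈ ℝ^m with ‖v‖ ≤ δ one has ‖f(p_k + v) − p_{k+1} − A_k v‖ ≤ μ‖v‖. Fix a natural number n. Then for any sequence {w_k ∈ ℝ^m, k ∈ ℤ} such that ‖w_k‖ < 1 for k ∈ [−n, n] and w_k = 0 for k ∉ [−n, n], there exists a sequence {z_k ∈ ℝ^m, k ∈ ℤ} such that ‖z_k‖ ≤ 8𝓛 + 1 for all k ∈ ℤ and z_{k+1} = A_k z_k + w_k for all k ∈ [−n, n]. -/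
open Filter Topology

/-- `f` has the Lipschitz shadowing property with constants `L`, `d₀`: every
`d`-pseudotrajectory with `0 < d ≤ d₀` is `L·d`-shadowed by a complete trajectory of `f`. -/
def LipschitzShadowing {m : ℕ} (f : EuclideanSpace ℝ (Fin m) → EuclideanSpace ℝ (Fin m))
    (L d₀ : ℝ) : Prop :=
  ∀ d : ℝ, 0 < d → d ≤ d₀ →
    ∀ x : ℤ → EuclideanSpace ℝ (Fin m),
      (∀ k : ℤ, ‖x (k + 1) - f (x k)‖ < d) →
      ∃ q : ℤ → EuclideanSpace ℝ (Fin m),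
        (∀ k : ℤ, q (k + 1) = f (q k)) ∧ ∀ k : ℤ, ‖x k - q k‖ ≤ L * d

set_option maxHeartbeats 1600000 in
/-- **Lemma 2 of Pilyugin–Tikhomirov.** If a C¹ diffeomorphism `f` has the Lipschitz
shadowing property with constants `L, d₀`, then along any trajectory `{p_k}`, for any
finitely supported sequence `{w_k}` with `‖w_k‖ < 1` on `[-n,n]` and `w_k = 0` outside,
there is a sequence `{z_k}` with `‖z_k‖ ≤ 8L + 1` solving `z_{k+1} = A_k z_k + w_k`
for `k ∈ [-n, n]`, where `A_k = Df(p_k)`. -/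
theorem lemma2_finite_interval_solution
    {m : ℕ} (f g : EuclideanSpace ℝ (Fin m) → EuclideanSpace ℝ (Fin m))
    (hf : ContDiff ℝ 1 f) (hg : ContDiff ℝ 1 g)
    (hgf : Function.LeftInverse g f) (hfg : Function.RightInverse g f)
    (L d₀ : ℝ) (hL : 0 < L) (hd₀ : 0 < d₀) (hshadow : LipschitzShadowing f L d₀)
    (p : ℤ → EuclideanSpace ℝ (Fin m)) (hp : ∀ k : ℤ, p (k + 1) = f (p k))
    (A : ℤ → (EuclideanSpace ℝ (Fin m) →L[ℝ] EuclideanSpace ℝ (Fin m)))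
    (hA : ∀ k : ℤ, A k = fderiv ℝ f (p k))
    (N : ℝ) (hN : 0 < N) (hAbound : ∀ k : ℤ, ‖A k‖ ≤ N)
    (hunif : ∀ μ : ℝ, 0 < μ → ∃ δ : ℝ, 0 < δ ∧
      ∀ k : ℤ, ∀ v : EuclideanSpace ℝ (Fin m), ‖v‖ ≤ δ →
        ‖f (p k + v) - p (k + 1) - A k v‖ ≤ μ * ‖v‖)
    (n : ℕ) (w : ℤ → EuclideanSpace ℝ (Fin m))
    (hw₁ : ∀ k : ℤ, -(n : ℤ) ≤ k → k ≤ n → ‖w k‖ < 1)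
    (hw₂ : ∀ k : ℤ, ¬(-(n : ℤ) ≤ k ∧ k ≤ n) → w k = 0) :
    ∃ z : ℤ → EuclideanSpace ℝ (Fin m),
      (∀ k : ℤ, ‖z k‖ ≤ 8 * L + 1) ∧
      ∀ k : ℤ, -(n : ℤ) ≤ k → k ≤ n → z (k + 1) = A k (z k) + w k := by
  classical
  -- constants
  set C : ℝ := (N + 2) ^ (2 * n + 2) with hCdef
  have hC1 : (1 : ℝ) ≤ C := one_le_pow₀ (by linarith)
  have hCpos : (0 : ℝ) < C := lt_of_lt_of_le one_pos hC1
  have hpowC : ∀ j : ℕ, j ≤ 2 * n + 2 → (N + 2) ^ j ≤ C := by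
    intro j hj
    exact pow_le_pow_right₀ (by linarith) hj
  have hdenpos : (0 : ℝ) < C * (L + 2 * C + 2) := by nlinarith
  set μ : ℝ := min 1 (1 / (C * (L + 2 * C + 2))) with hμdef
  have hμpos : 0 < μ := lt_min one_pos (by positivity)
  have hμ1 : μ ≤ 1 := min_le_left _ _
  obtain ⟨δ, hδpos, hδ⟩ := hunif μ hμpos
  set d : ℝ := min d₀ (δ / (L + C + 1)) with hddef
  have hdpos : 0 < d := lt_min hd₀ (div_pos hδpos (by linarith))
  have hdd₀ : d ≤ d₀ := min_le_left _ _
  have hdle : d * (L + C + 1) ≤ δ := by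
    have h1 : d ≤ δ / (L + C + 1) := min_le_right _ _
    rwa [le_div_iff₀ (by linarith)] at h1
  have hLCd : (L + C) * d ≤ δ := by nlinarith
  have hCd : C * d ≤ δ := by nlinarith
  -- the perturbed sequence
  set x : ℕ → EuclideanSpace ℝ (Fin m) :=
    fun j => Nat.rec (p (-(n : ℤ))) (fun j xj => f xj + d • w (-(n : ℤ) + j)) j with hxdef
  have hx0 : x 0 = p (-(n : ℤ)) := rfl
  have hxs : ∀ j : ℕ, x (j + 1) = f (x j) + d • w (-(n : ℤ) + j) := fun j => rfl
  set X : ℤ → EuclideanSpace ℝ (Fin m) :=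
    fun k => if k < -(n : ℤ) then p k else x (k + n).toNat with hXdef
  have hXlt : ∀ k : ℤ, k < -(n : ℤ) → X k = p k := by
    intro k hk; simp only [hXdef, if_pos hk]
  have hXge : ∀ k : ℤ, -(n : ℤ) ≤ k → X k = x (k + n).toNat := by
    intro k hk; simp only [hXdef, if_neg (not_lt.mpr hk)]
  have hXn : X (-(n : ℤ)) = p (-(n : ℤ)) := by
    rw [hXge _ le_rfl, show ((-(n : ℤ)) + n).toNat = 0 by omega, hx0]
  have hstep : ∀ k : ℤ, -(n : ℤ) ≤ k → X (k + 1) = f (X k) + d • w k := by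
    intro k hk
    rw [hXge (k + 1) (by omega), show ((k + 1) + n).toNat = (k + n).toNat + 1 by omega,
      hxs, show -(n : ℤ) + ((k + n).toNat : ℤ) = k by omega, hXge k hk]
  -- X is a d-pseudotrajectory
  have hpseudo : ∀ k : ℤ, ‖X (k + 1) - f (X k)‖ < d := by
    intro k
    by_cases h1 : k < -(n : ℤ)
    · rw [hXlt k h1]
      by_cases h2 : k + 1 < -(n : ℤ)
      · rw [hXlt _ h2, hp k]; simpa using hdpos
      · rw [show k + 1 = -(n : ℤ) by omega, hXn,
          show -(n : ℤ) = k + 1 by omega, hp k]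
        simpa using hdpos
    · push_neg at h1
      rw [hstep k h1, add_sub_cancel_left, norm_smul, Real.norm_eq_abs,
        abs_of_pos hdpos]
      by_cases h3 : k ≤ (n : ℤ)
      · have := hw₁ k h1 h3
        nlinarith [norm_nonneg (w k)]
      · rw [hw₂ k (by omega)]
        simpa using hdpos
  obtain ⟨q, hq, hqX⟩ := hshadow d hdpos hdd₀ X hpseudo
  -- bound on ‖X - p‖ along the interval
  have hs : ∀ j : ℕ, j ≤ 2 * n + 1 →
      ‖X (-(n : ℤ) + j) - p (-(n : ℤ) + j)‖ ≤ ((N + 2) ^ j - 1) * d := by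
    intro j
    induction j with
    | zero => simp [hXn]
    | succ j ih =>
      intro hju
      have ihj := ih (by omega)
      have hju' : ‖X (-(n : ℤ) + j) - p (-(n : ℤ) + j)‖ ≤ δ := by
        have h1 : ((N + 2 : ℝ) ^ j - 1) * d ≤ C * d := by
          have := hpowC j (by omega)
          nlinarith
        linarith
      set k : ℤ := -(n : ℤ) + j with hkdef
      set u := X k - p k with hudef
      have hu := hδ k u hju'
      have hpu : p k + u = X k := by rw [hudef]; abel
      have hcast : -(n : ℤ) + ((j : ℤ) + 1) = k + 1 := by rw [hkdef]; ring
      have hwk : ‖w k‖ ≤ 1 := by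
        by_cases h3 : k ≤ (n : ℤ)
        · exact le_of_lt (hw₁ k (by omega) h3)
        · rw [hw₂ k (by omega)]; simp
      have heq : X (k + 1) - p (k + 1) =
          (f (p k + u) - p (k + 1) - A k u) + A k u + d • w k := by
        rw [hpu, hstep k (by omega)]; abel
      push_cast
      rw [hcast, heq]
      have h2 : ‖A k u‖ ≤ N * ‖u‖ := le_trans ((A k).le_opNorm u)
        (mul_le_mul_of_nonneg_right (hAbound k) (norm_nonneg u))
      have h3 : ‖d • w k‖ ≤ d := by
        rw [norm_smul, Real.norm_eq_abs, abs_of_pos hdpos]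
        nlinarith [norm_nonneg (w k)]
      have h4 : ‖(f (p k + u) - p (k + 1) - A k u) + A k u + d • w k‖ ≤
          μ * ‖u‖ + N * ‖u‖ + d := by
        refine le_trans (norm_add₃_le) (by linarith)
      have h5 : ‖u‖ ≤ ((N + 2) ^ j - 1) * d := ihj
      have h6 : (0:ℝ) ≤ ‖u‖ := norm_nonneg u
      have h7 : (1:ℝ) ≤ (N + 2) ^ j := one_le_pow₀ (by linarith)
      calc ‖(f (p k + u) - p (k + 1) - A k u) + A k u + d • w k‖
          ≤ μ * ‖u‖ + N * ‖u‖ + d := h4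
        _ ≤ ((N + 2) ^ (j + 1) - 1) * d := by
            rw [pow_succ]
            nlinarith
  -- bound on ‖q - p‖
  have hqp : ∀ j : ℕ, j ≤ 2 * n + 1 →
      ‖q (-(n : ℤ) + j) - p (-(n : ℤ) + j)‖ ≤ (L + C) * d := by
    intro j hj
    have h1 := hqX (-(n : ℤ) + j)
    have h2 := hs j hj
    have h3 : ((N + 2 : ℝ) ^ j - 1) * d ≤ C * d := by
      have := hpowC j (by omega); nlinarith
    calc ‖q (-(n : ℤ) + j) - p (-(n : ℤ) + j)‖
        ≤ ‖X (-(n : ℤ) + j) - q (-(n : ℤ) + j)‖ +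
          ‖X (-(n : ℤ) + j) - p (-(n : ℤ) + j)‖ := by
          rw [← norm_neg (X (-(n : ℤ) + j) - q (-(n : ℤ) + j))]
          refine le_trans (le_of_eq ?_) (norm_add_le _ _)
          congr 1; abel
      _ ≤ L * d + C * d := add_le_add h1 (le_trans h2 h3)
      _ = (L + C) * d := by ring
  -- the error in the linear difference equation for D = X - q
  have hE : ∀ j : ℕ, j ≤ 2 * n →
      ‖(X (-(n : ℤ) + j + 1) - q (-(n : ℤ) + j + 1)) -
        A (-(n : ℤ) + j) (X (-(n : ℤ) + j) - q (-(n : ℤ) + j)) -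
        d • w (-(n : ℤ) + j)‖ ≤ μ * ((L + 2 * C) * d) := by
    intro j hj
    set k : ℤ := -(n : ℤ) + j with hkdef
    set u := X k - p k with hudef
    set v := q k - p k with hvdef
    have hsu : ‖u‖ ≤ C * d := by
      have := hs j (by omega)
      have h3 : ((N + 2 : ℝ) ^ j - 1) * d ≤ C * d := by
        have := hpowC j (by omega); nlinarith
      exact le_trans this h3
    have hsv : ‖v‖ ≤ (L + C) * d := hqp j (by omega)
    have hδu := hδ k u (le_trans hsu hCd)
    have hδv := hδ k v (le_trans hsv hLCd)
    have hpu : p k + u = X k := by rw [hudef]; abel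
    have hpv : p k + v = q k := by rw [hvdef]; abel
    rw [hpu] at hδu
    rw [hpv] at hδv
    have heq : (X (k + 1) - q (k + 1)) - A k (X k - q k) - d • w k =
        (f (X k) - p (k + 1) - A k u) - (f (q k) - p (k + 1) - A k v) := by
      rw [hstep k (by omega), hq k, hudef, hvdef, map_sub, map_sub, map_sub]
      abel
    rw [heq]
    calc ‖(f (X k) - p (k + 1) - A k u) - (f (q k) - p (k + 1) - A k v)‖
        ≤ ‖f (X k) - p (k + 1) - A k u‖ + ‖f (q k) - p (k + 1) - A k v‖ :=
          norm_sub_le _ _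
      _ ≤ μ * ‖u‖ + μ * ‖v‖ := add_le_add hδu hδv
      _ ≤ μ * (C * d) + μ * ((L + C) * d) := by
          have := hμpos.le
          exact add_le_add (mul_le_mul_of_nonneg_left hsu this)
            (mul_le_mul_of_nonneg_left hsv this)
      _ = μ * ((L + 2 * C) * d) := by ring
  -- the exact solution of the linear equation, starting from X - q at time -n
  set Z : ℕ → EuclideanSpace ℝ (Fin m) :=
    fun j => Nat.rec (X (-(n : ℤ)) - q (-(n : ℤ)))
      (fun j Zj => A (-(n : ℤ) + j) Zj + d • w (-(n : ℤ) + j)) j with hZdef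
  have hZ0 : Z 0 = X (-(n : ℤ)) - q (-(n : ℤ)) := rfl
  have hZs : ∀ j : ℕ, Z (j + 1) = A (-(n : ℤ) + j) (Z j) + d • w (-(n : ℤ) + j) :=
    fun j => rfl
  set ε : ℝ := μ * ((L + 2 * C) * d) with hεdef
  have hεpos : 0 < ε := by
    apply mul_pos hμpos
    apply mul_pos (by nlinarith) hdpos
  have hU : ∀ j : ℕ, j ≤ 2 * n + 1 →
      ‖Z j - (X (-(n : ℤ) + j) - q (-(n : ℤ) + j))‖ ≤ ((N + 2) ^ j - 1) * ε := by
    intro j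
    induction j with
    | zero => simp [hZ0]
    | succ j ih =>
      intro hju
      have ihj := ih (by omega)
      set k : ℤ := -(n : ℤ) + j with hkdef
      have hcast : -(n : ℤ) + ((j : ℤ) + 1) = k + 1 := by rw [hkdef]; ring
      push_cast
      rw [hcast]
      have heq : Z (j + 1) - (X (k + 1) - q (k + 1)) =
          A k (Z j - (X k - q k)) -
          ((X (k + 1) - q (k + 1)) - A k (X k - q k) - d • w k) := by
        rw [hZs j, map_sub]
        abel
      rw [heq]
      have h1 : ‖A k (Z j - (X k - q k))‖ ≤ N * ‖Z j - (X k - q k)‖ :=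
        le_trans ((A k).le_opNorm _)
          (mul_le_mul_of_nonneg_right (hAbound k) (norm_nonneg _))
      have h2 := hE j (by omega)
      have h7 : (1:ℝ) ≤ (N + 2) ^ j := one_le_pow₀ (by linarith)
      calc ‖A k (Z j - (X k - q k)) -
            ((X (k + 1) - q (k + 1)) - A k (X k - q k) - d • w k)‖
          ≤ ‖A k (Z j - (X k - q k))‖ +
            ‖(X (k + 1) - q (k + 1)) - A k (X k - q k) - d • w k‖ :=
            norm_sub_le _ _
        _ ≤ N * ‖Z j - (X k - q k)‖ + ε := add_le_add h1 h2
        _ ≤ ((N + 2) ^ (j + 1) - 1) * ε := by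
            rw [pow_succ]
            nlinarith [norm_nonneg (Z j - (X k - q k))]
  -- the bound on Z
  have hZbound : ∀ j : ℕ, j ≤ 2 * n + 1 → ‖Z j‖ ≤ (L + 1) * d := by
    intro j hj
    have h1 := hU j hj
    have h2 := hqX (-(n : ℤ) + j)
    have hCε : ((N + 2 : ℝ) ^ j - 1) * ε ≤ d := by
      have h3 : ((N + 2 : ℝ) ^ j - 1) ≤ C := by
        have := hpowC j (by omega)
        have h7 : (1:ℝ) ≤ (N + 2) ^ j := one_le_pow₀ (by linarith)
        linarith
      have hμle : μ ≤ 1 / (C * (L + 2 * C + 2)) := min_le_right _ _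
      have hμle' : μ * (C * (L + 2 * C + 2)) ≤ 1 := by
        rw [le_div_iff₀ hdenpos] at hμle; linarith
      have h8 : (0:ℝ) ≤ (N + 2 : ℝ) ^ j - 1 := by
        have h7 : (1:ℝ) ≤ (N + 2) ^ j := one_le_pow₀ (by linarith)
        linarith
      calc ((N + 2 : ℝ) ^ j - 1) * ε ≤ C * ε :=
            mul_le_mul_of_nonneg_right h3 hεpos.le
        _ = (μ * (C * (L + 2 * C))) * d := by rw [hεdef]; ring
        _ ≤ 1 * d := by
            apply mul_le_mul_of_nonneg_right _ hdpos.le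
            nlinarith [hμpos.le]
        _ = d := one_mul d
    calc ‖Z j‖ ≤ ‖X (-(n : ℤ) + j) - q (-(n : ℤ) + j)‖ +
          ‖Z j - (X (-(n : ℤ) + j) - q (-(n : ℤ) + j))‖ := by
          refine le_trans (le_of_eq ?_) (norm_add_le _ _)
          congr 1; abel
      _ ≤ L * d + d := add_le_add h2 (le_trans h1 hCε)
      _ = (L + 1) * d := by ring
  -- final definition of z
  refine ⟨fun k => if -(n : ℤ) ≤ k ∧ k ≤ (n : ℤ) + 1 then d⁻¹ • Z (k + n).toNat
    else 0, ?_, ?_⟩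
  · intro k
    by_cases h : -(n : ℤ) ≤ k ∧ k ≤ (n : ℤ) + 1
    · simp only [if_pos h]
      rw [norm_smul, Real.norm_eq_abs, abs_of_pos (inv_pos.mpr hdpos)]
      have h1 : ‖Z (k + n).toNat‖ ≤ (L + 1) * d := hZbound _ (by omega)
      calc d⁻¹ * ‖Z (k + n).toNat‖ ≤ d⁻¹ * ((L + 1) * d) :=
            mul_le_mul_of_nonneg_left h1 (inv_pos.mpr hdpos).le
        _ = L + 1 := by field_simp
        _ ≤ 8 * L + 1 := by linarith
    · simp only [if_neg h, norm_zero]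
      linarith
  · intro k hk1 hk2
    have hc1 : -(n : ℤ) ≤ k ∧ k ≤ (n : ℤ) + 1 := ⟨hk1, by omega⟩
    have hc2 : -(n : ℤ) ≤ k + 1 ∧ k + 1 ≤ (n : ℤ) + 1 := ⟨by omega, by omega⟩
    simp only [if_pos hc1, if_pos hc2]
    rw [show ((k + 1) + n).toNat = (k + n).toNat + 1 by omega, hZs,
      show -(n : ℤ) + ((k + n).toNat : ℤ) = k by omega,
      smul_add, (A k).map_smul, smul_smul, inv_mul_cancel₀ hdpos.ne', one_smul]
end
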